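/- The image f(X) of a pseudo-linear set X ⊆ ℤ^n under a linear (affine) function f : ℤ^n → ℤ^{n'} given by f(x) = Ax + v is pseudo-linear. Moreover, if L is a linearization of X, then f(L) is a linearization of f(X). -/

import Mathlib

open scoped Pointwise

/-- `a` is an interior vector of the monoid `M ⊆ ℤ^n`. -/
def IsInteriorZ {n : ℕ} (M : Set (Fin n → ℤ)) (a : Fin n → ℤ) : Prop :=
  a ∈ M ∧ ∀ x ∈ M, ∃ N : ℕ, 1 ≤ N ∧ ∃ m ∈ M, N • a = x + m

/-- `M` is a finitely generated (additive sub)monoid of ℤ^n (as a set). -/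
def IsFGMonoid {n : ℕ} (M : Set (Fin n → ℤ)) : Prop :=
  ∃ P : Finset (Fin n → ℤ),
    M = (AddSubmonoid.closure (P : Set (Fin n → ℤ)) : Set (Fin n → ℤ))

/-- `L` is a linearization of the pseudo-linear set `X`. -/
def IsLinearization {n : ℕ} (L X : Set (Fin n → ℤ)) : Prop :=
  ∃ (b : Fin n → ℤ) (M : Set (Fin n → ℤ)), IsFGMonoid M ∧ L = b +ᵥ M ∧ X ⊆ L ∧
    ∀ R : Finset (Fin n → ℤ), (∀ r ∈ R, IsInteriorZ M r) →
      ∃ x ∈ X, x +ᵥ (AddSubmonoid.closure (R : Set (Fin n → ℤ)) : Set (Fin n → ℤ)) ⊆ X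

/-- `X ⊆ ℤ^n` is pseudo-linear. -/
def IsPseudoLinear {n : ℕ} (X : Set (Fin n → ℤ)) : Prop :=
  ∃ L, IsLinearization L X

/-- The sum of the generators is an interior vector. -/
lemma isInteriorZ_sum_gen {n : ℕ} (P : Finset (Fin n → ℤ)) :
    IsInteriorZ (AddSubmonoid.closure (P : Set (Fin n → ℤ)) : Set _) (∑ p ∈ P, p) := by
  constructor
  · exact AddSubmonoid.sum_mem _ fun p hp => AddSubmonoid.subset_closure hp
  · intro x hx
    induction hx using AddSubmonoid.closure_induction with
    | mem p hp =>
      exact ⟨1, le_refl 1, ∑ q ∈ P.erase p, q,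
        AddSubmonoid.sum_mem _ (fun q hq => AddSubmonoid.subset_closure (P.erase_subset _ hq)),
        by rw [one_smul]; exact (Finset.add_sum_erase P (fun q => q) hp).symm⟩
    | zero => exact ⟨1, le_refl 1, ∑ p ∈ P, p,
        AddSubmonoid.sum_mem _ fun p hp => AddSubmonoid.subset_closure hp, by simp⟩
    | add x y hx hy ihx ihy =>
      obtain ⟨N₁, hN₁, m₁, hm₁, he₁⟩ := ihx
      obtain ⟨N₂, hN₂, m₂, hm₂, he₂⟩ := ihy
      exact ⟨N₁ + N₂, le_trans hN₁ (Nat.le_add_right _ _), m₁ + m₂, add_mem hm₁ hm₂, by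
        rw [add_smul, he₁, he₂]; abel⟩

/-- Adding a monoid element to an interior vector keeps it interior. -/
lemma isInteriorZ_add_mem {n : ℕ} (M : AddSubmonoid (Fin n → ℤ)) (a m : Fin n → ℤ)
    (ha : IsInteriorZ (M : Set _) a) (hm : m ∈ M) : IsInteriorZ (M : Set _) (a + m) := by
  refine ⟨add_mem ha.1 hm, fun x hx => ?_⟩
  obtain ⟨N, hN, m', hm', he⟩ := ha.2 x hx
  exact ⟨N, hN, m' + N • m, add_mem hm' (AddSubmonoid.nsmul_mem _ hm _), by
    rw [smul_add, he]; abel⟩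

lemma image_isLinearization {n n' : ℕ} (A : Matrix (Fin n') (Fin n) ℤ) (v : Fin n' → ℤ)
    (f : (Fin n → ℤ) → (Fin n' → ℤ)) (hf : ∀ x, f x = A.mulVec x + v)
    (X L : Set (Fin n → ℤ)) (hL : IsLinearization L X) :
    IsLinearization (f '' L) (f '' X) := by
  classical
  obtain ⟨b, M, ⟨P, hP⟩, hLb, hXL, habs⟩ := hL
  subst hP
  subst hLb
  set g : (Fin n → ℤ) →+ (Fin n' → ℤ) := (Matrix.mulVecLin A).toAddMonoidHom with hgdef
  have hgapp : ∀ x, g x = A.mulVec x := fun x => rfl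
  set P' : Finset (Fin n' → ℤ) := P.image g with hP'def
  have hM' : AddSubmonoid.closure (P' : Set (Fin n' → ℤ))
      = (AddSubmonoid.closure (P : Set (Fin n → ℤ))).map g := by
    rw [AddMonoidHom.map_mclosure, hP'def, Finset.coe_image]
  have hfadd : ∀ x y : Fin n → ℤ, f (x + y) = f x + g y := by
    intro x y; rw [hf, hf, hgapp, Matrix.mulVec_add]; abel
  refine ⟨f b, _, ⟨P', rfl⟩, ?_, Set.image_mono hXL, ?_⟩
  · -- f '' (b +ᵥ closure P) = f b +ᵥ closure P'
    ext z
    constructor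
    · rintro ⟨x, hx, rfl⟩
      obtain ⟨m, hm, rfl⟩ := Set.mem_vadd_set.mp hx
      rw [vadd_eq_add, hfadd]
      exact Set.vadd_mem_vadd_set (by rw [SetLike.mem_coe, hM']; exact ⟨m, hm, rfl⟩)
    · intro hz
      obtain ⟨m', hm', rfl⟩ := Set.mem_vadd_set.mp hz
      rw [SetLike.mem_coe, hM'] at hm'
      obtain ⟨m, hm, rfl⟩ := hm'
      exact ⟨b + m, Set.vadd_mem_vadd_set hm, by rw [vadd_eq_add, hfadd]⟩
  · intro R' hR'
    set s : Fin n → ℤ := ∑ p ∈ P, p with hsdef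
    have hsInt : IsInteriorZ (AddSubmonoid.closure (P : Set (Fin n → ℤ)) : Set _) s :=
      isInteriorZ_sum_gen P
    have hgs : g s ∈ AddSubmonoid.closure (P' : Set (Fin n' → ℤ)) := by
      rw [hM']; exact ⟨s, hsInt.1, rfl⟩
    -- for each r ∈ R', get N₀ with N₀ • r = g s + m'
    have hstep : ∀ r : {x // x ∈ R'}, ∃ N : ℕ, 1 ≤ N ∧
        ∃ m ∈ (AddSubmonoid.closure (P' : Set (Fin n' → ℤ)) : Set _),
          N • (r : Fin n' → ℤ) = g s + m :=
      fun r => (hR' r r.2).2 (g s) hgs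
    choose N₀ hN₀ m' hm' heq using hstep
    set N : ℕ := (Finset.univ.sup fun r : {x // x ∈ R'} => N₀ r) + 1 with hNdef
    have hNpos : 0 < N := Nat.succ_pos _
    have hNle : ∀ r : {x // x ∈ R'}, N₀ r ≤ N :=
      fun r => le_trans (Finset.le_sup (Finset.mem_univ r)) (Nat.le_succ _)
    -- lift N • r to an element of closure P
    have hlift : ∀ r : {x // x ∈ R'}, ∃ u,
        u ∈ AddSubmonoid.closure (P : Set (Fin n → ℤ)) ∧
          N • (r : Fin n' → ℤ) = g s + g u := by
      intro r
      have hrM : (r : Fin n' → ℤ) ∈ AddSubmonoid.closure (P' : Set (Fin n' → ℤ)) :=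
        (hR' r r.2).1
      have hmem : m' r + (N - N₀ r) • (r : Fin n' → ℤ)
          ∈ AddSubmonoid.closure (P' : Set (Fin n' → ℤ)) :=
        add_mem (hm' r) (AddSubmonoid.nsmul_mem _ hrM _)
      rw [hM'] at hmem
      obtain ⟨u, hu, hgu⟩ := hmem
      refine ⟨u, hu, ?_⟩
      have hsplit : N • (r : Fin n' → ℤ) = N₀ r • (r : Fin n' → ℤ)
          + (N - N₀ r) • (r : Fin n' → ℤ) := by
        rw [← add_smul, Nat.add_sub_cancel' (hNle r)]
      rw [hsplit, heq r, hgu]; abel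
    choose u hu hgu using hlift
    set q : {x // x ∈ R'} → (Fin n → ℤ) := fun r => s + u r with hqdef
    have hqInt : ∀ r, IsInteriorZ (AddSubmonoid.closure (P : Set (Fin n → ℤ)) : Set _) (q r) :=
      fun r => isInteriorZ_add_mem _ _ _ hsInt (hu r)
    have hgq : ∀ r, g (q r) = N • (r : Fin n' → ℤ) := by
      intro r; rw [hqdef]; simp only [map_add]; rw [← hgu r]
    -- residue corrections
    have hres : ∀ β : {x // x ∈ R'} → Fin N, ∃ w,
        w ∈ AddSubmonoid.closure (P : Set (Fin n → ℤ)) ∧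
          g w = ∑ r : {x // x ∈ R'}, ((β r : ℕ)) • (r : Fin n' → ℤ) := by
      intro β
      have hmem : (∑ r : {x // x ∈ R'}, ((β r : ℕ)) • (r : Fin n' → ℤ))
          ∈ AddSubmonoid.closure (P' : Set (Fin n' → ℤ)) :=
        AddSubmonoid.sum_mem _ fun r _ => AddSubmonoid.nsmul_mem _ ((hR' r r.2).1) _
      rw [hM'] at hmem
      obtain ⟨w, hw, hgw⟩ := hmem
      exact ⟨w, hw, hgw⟩
    choose w hw hgw using hres
    set t : ({x // x ∈ R'} → Fin N) → (Fin n → ℤ) := fun β => s + w β with htdef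
    have htInt : ∀ β, IsInteriorZ (AddSubmonoid.closure (P : Set (Fin n → ℤ)) : Set _) (t β) :=
      fun β => isInteriorZ_add_mem _ _ _ hsInt (hw β)
    set R : Finset (Fin n → ℤ) :=
      insert s (Finset.univ.image q ∪ Finset.univ.image t) with hRdef
    have hRint : ∀ r ∈ R, IsInteriorZ
        (AddSubmonoid.closure (P : Set (Fin n → ℤ)) : Set _) r := by
      intro r hr
      rw [hRdef, Finset.mem_insert, Finset.mem_union, Finset.mem_image, Finset.mem_image] at hr
      rcases hr with rfl | ⟨r₀, _, rfl⟩ | ⟨β, _, rfl⟩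
      · exact hsInt
      · exact hqInt r₀
      · exact htInt β
    obtain ⟨x, hxX, hxabs⟩ := habs R hRint
    have hsR : s ∈ AddSubmonoid.closure (R : Set (Fin n → ℤ)) :=
      AddSubmonoid.subset_closure (by rw [hRdef]; exact Finset.mem_insert_self _ _)
    have hxs : x + s ∈ X := hxabs (Set.vadd_mem_vadd_set hsR)
    refine ⟨f (x + s), ⟨x + s, hxs, rfl⟩, ?_⟩
    intro z hz
    obtain ⟨z₀, hz₀, rfl⟩ := Set.mem_vadd_set.mp hz
    rw [SetLike.mem_coe, ← Submodule.span_nat_eq_addSubmonoidClosure,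
      Submodule.mem_toAddSubmonoid] at hz₀
    obtain ⟨k, -, hk⟩ := Submodule.mem_span_finset.mp hz₀
    set β : {x // x ∈ R'} → Fin N := fun r => ⟨k r % N, Nat.mod_lt _ hNpos⟩ with hβdef
    set c : Fin n → ℤ := t β + ∑ r : {x // x ∈ R'}, (k r / N) • q r with hcdef
    have hcR : c ∈ AddSubmonoid.closure (R : Set (Fin n → ℤ)) := by
      refine add_mem (AddSubmonoid.subset_closure ?_)
        (AddSubmonoid.sum_mem _ fun r _ => AddSubmonoid.nsmul_mem _
          (AddSubmonoid.subset_closure ?_) _)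
      · rw [hRdef]
        exact Finset.mem_insert_of_mem (Finset.mem_union_right _
          (Finset.mem_image_of_mem t (Finset.mem_univ β)))
      · rw [hRdef]
        exact Finset.mem_insert_of_mem (Finset.mem_union_left _
          (Finset.mem_image_of_mem q (Finset.mem_univ r)))
    have hxc : x + c ∈ X := hxabs (Set.vadd_mem_vadd_set hcR)
    have hgc : g c = g s + z₀ := by
      rw [hcdef, map_add, map_sum, htdef, map_add, hgw]
      simp only [map_nsmul, hgq]
      have : (∑ r : {x // x ∈ R'}, ((β r : ℕ)) • (r : Fin n' → ℤ))
          + ∑ r : {x // x ∈ R'}, (k r / N) • (N • (r : Fin n' → ℤ)) = z₀ := by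
        rw [← Finset.sum_add_distrib, ← hk, ← Finset.sum_coe_sort R' (fun i => k i • i)]
        refine Finset.sum_congr rfl fun r _ => ?_
        rw [hβdef]
        show (k r % N) • (r : Fin n' → ℤ) + (k ↑r / N) • N • (r : Fin n' → ℤ)
          = k ↑r • (r : Fin n' → ℤ)
        rw [← mul_smul, ← add_smul, Nat.mod_add_div' (k r) N]
      rw [add_assoc, this]
    have : f (x + s) +ᵥ z₀ = f (x + c) := by
      rw [vadd_eq_add, hfadd, hfadd, hgc]
      abel
    rw [this]
    exact ⟨x + c, hxc, rfl⟩

theorem stmt3 {n n' : ℕ} (A : Matrix (Fin n') (Fin n) ℤ) (v : Fin n' → ℤ)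
    (f : (Fin n → ℤ) → (Fin n' → ℤ)) (hf : ∀ x, f x = A.mulVec x + v)
    (X : Set (Fin n → ℤ)) (hX : IsPseudoLinear X) :
    IsPseudoLinear (f '' X) ∧
      ∀ L, IsLinearization L X → IsLinearization (f '' L) (f '' X) := by
  obtain ⟨L, hL⟩ := hX
  exact ⟨⟨f '' L, image_isLinearization A v f hf X L hL⟩,
    fun L' hL' => image_isLinearization A v f hf X L' hL'⟩
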